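/- Let F1(τ, θ1, θ1', θ2, θ2') = θ2' + θ1² cos(ω2 τ) and F2 ≡ 0, and take p = 1. Then for all (Z0, W0) ∈ ℝ²: 𝒢¹(Z0, W0) = −π (√((10 − 7√2)(2 + √2)) W0 − 8) Z0 / (4 √(2(2 + √2))) and 𝒢²(Z0, W0) = π (√2 W0² − 2 W0² − 16 W0 + 3√2 Z0² − 6 Z0²) / (8 √(2(2 + √2))). -/

import Mathlib

open Real MeasureTheory intervalIntegral

private lemma hda_congr {f : ℝ → ℝ} {d d' x : ℝ} (h : HasDerivAt f d x) (hd : d = d') :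
    HasDerivAt f d' x := hd ▸ h

/-- linearized integrand for 𝒢¹ -/
private noncomputable def gg1 (ω Z0 W0 τ : ℝ) : ℝ :=
  (-(Real.sqrt 2)) * (W0 * (Real.sin (ω*τ) * Real.cos (ω*τ))
    - Z0 * (1/2 - (Real.cos (ω*τ)^2 - Real.sin (ω*τ)^2)/2)
    + (Z0^2 * (Real.cos (ω*τ)^3 * Real.sin (ω*τ))
      + 2*Z0*W0 * (1/8 - (Real.cos (ω*τ)^4 - 6*Real.cos (ω*τ)^2*Real.sin (ω*τ)^2 + Real.sin (ω*τ)^4)/8)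
      + W0^2 * (Real.sin (ω*τ)^3 * Real.cos (ω*τ)))/(4+2*Real.sqrt 2))

/-- antiderivative for 𝒢¹ -/
private noncomputable def HH1 (ω Z0 W0 τ : ℝ) : ℝ :=
  (-(Real.sqrt 2)) * (W0 * Real.sin (ω*τ)^2/(2*ω)
    - Z0 * (τ/2 - Real.sin (ω*τ)*Real.cos (ω*τ)/(2*ω))
    + ((-(Z0^2)) * Real.cos (ω*τ)^4/(4*ω)
      + 2*Z0*W0*(τ/8 - Real.sin (ω*τ)*Real.cos (ω*τ)*(Real.cos (ω*τ)^2 - Real.sin (ω*τ)^2)/(8*ω))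
      + W0^2 * Real.sin (ω*τ)^4/(4*ω))/(4+2*Real.sqrt 2))

/-- linearized integrand for 𝒢² -/
private noncomputable def gg2 (ω Z0 W0 τ : ℝ) : ℝ :=
  (-(Real.sqrt 2)) * (W0 * (1/2 + (Real.cos (ω*τ)^2 - Real.sin (ω*τ)^2)/2)
    - Z0 * (Real.sin (ω*τ) * Real.cos (ω*τ))
    + (Z0^2 * (3/8 + (Real.cos (ω*τ)^2 - Real.sin (ω*τ)^2)/2
        + (Real.cos (ω*τ)^4 - 6*Real.cos (ω*τ)^2*Real.sin (ω*τ)^2 + Real.sin (ω*τ)^4)/8)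
      + 2*Z0*W0 * (Real.sin (ω*τ) * Real.cos (ω*τ)^3)
      + W0^2 * (1/8 - (Real.cos (ω*τ)^4 - 6*Real.cos (ω*τ)^2*Real.sin (ω*τ)^2 + Real.sin (ω*τ)^4)/8))
      /(4+2*Real.sqrt 2))

/-- antiderivative for 𝒢² -/
private noncomputable def HH2 (ω Z0 W0 τ : ℝ) : ℝ :=
  (-(Real.sqrt 2)) * (W0 * (τ/2 + Real.sin (ω*τ)*Real.cos (ω*τ)/(2*ω))
    - Z0 * Real.sin (ω*τ)^2/(2*ω)
    + (Z0^2 * (3*τ/8 + Real.sin (ω*τ)*Real.cos (ω*τ)/(2*ω)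
        + Real.sin (ω*τ)*Real.cos (ω*τ)*(Real.cos (ω*τ)^2 - Real.sin (ω*τ)^2)/(8*ω))
      + 2*Z0*W0 * (-(Real.cos (ω*τ)^4/(4*ω)))
      + W0^2 * (τ/8 - Real.sin (ω*τ)*Real.cos (ω*τ)*(Real.cos (ω*τ)^2 - Real.sin (ω*τ)^2)/(8*ω)))
      /(4+2*Real.sqrt 2))

private lemma hh1_deriv (ω Z0 W0 : ℝ) (hω : ω ≠ 0) (x : ℝ) :
    HasDerivAt (HH1 ω Z0 W0) (gg1 ω Z0 W0 x) x := by
  unfold HH1 gg1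
  have hlin : HasDerivAt (fun τ : ℝ => ω * τ) ω x := by simpa using (hasDerivAt_id x).const_mul ω
  have hs : HasDerivAt (fun τ : ℝ => Real.sin (ω*τ)) (Real.cos (ω*x) * ω) x :=
    (Real.hasDerivAt_sin (ω*x)).comp x hlin
  have hc : HasDerivAt (fun τ : ℝ => Real.cos (ω*τ)) (-Real.sin (ω*x) * ω) x :=
    (Real.hasDerivAt_cos (ω*x)).comp x hlin
  have hid : HasDerivAt (fun τ : ℝ => τ) 1 x := hasDerivAt_id x
  have hKne : (4 + 2*Real.sqrt 2) ≠ 0 := by positivity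
  have t1 := ((hs.pow 2).const_mul W0).div_const (2*ω)
  have t2 := ((hid.div_const 2).sub ((hs.mul hc).div_const (2*ω))).const_mul Z0
  have t3a := ((hc.pow 4).const_mul (-(Z0^2))).div_const (4*ω)
  have t3b := ((hid.div_const 8).sub (((hs.mul hc).mul ((hc.pow 2).sub (hs.pow 2))).div_const (8*ω))).const_mul (2*Z0*W0)
  have t3c := ((hs.pow 4).const_mul (W0^2)).div_const (4*ω)
  have t3 := ((t3a.add t3b).add t3c).div_const (4+2*Real.sqrt 2)
  have tot := ((t1.sub t2).add t3).const_mul (-(Real.sqrt 2))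
  refine hda_congr tot ?_
  norm_num
  field_simp
  ring

private lemma hh2_deriv (ω Z0 W0 : ℝ) (hω : ω ≠ 0) (x : ℝ) :
    HasDerivAt (HH2 ω Z0 W0) (gg2 ω Z0 W0 x) x := by
  unfold HH2 gg2
  have hlin : HasDerivAt (fun τ : ℝ => ω * τ) ω x := by simpa using (hasDerivAt_id x).const_mul ω
  have hs : HasDerivAt (fun τ : ℝ => Real.sin (ω*τ)) (Real.cos (ω*x) * ω) x :=
    (Real.hasDerivAt_sin (ω*x)).comp x hlin
  have hc : HasDerivAt (fun τ : ℝ => Real.cos (ω*τ)) (-Real.sin (ω*x) * ω) x :=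
    (Real.hasDerivAt_cos (ω*x)).comp x hlin
  have hid : HasDerivAt (fun τ : ℝ => τ) 1 x := hasDerivAt_id x
  have hKne : (4 + 2*Real.sqrt 2) ≠ 0 := by positivity
  have t1 := ((hid.div_const 2).add ((hs.mul hc).div_const (2*ω))).const_mul W0
  have t2 := (((hs.pow 2).const_mul Z0)).div_const (2*ω)
  have t3a := ((((hid.const_mul 3).div_const 8).add ((hs.mul hc).div_const (2*ω))).add
    (((hs.mul hc).mul ((hc.pow 2).sub (hs.pow 2))).div_const (8*ω))).const_mul (Z0^2)
  have t3b := (((hc.pow 4).div_const (4*ω)).neg).const_mul (2*Z0*W0)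
  have t3c := ((hid.div_const 8).sub (((hs.mul hc).mul ((hc.pow 2).sub (hs.pow 2))).div_const (8*ω))).const_mul (W0^2)
  have t3 := ((t3a.add t3b).add t3c).div_const (4+2*Real.sqrt 2)
  have tot := ((t1.sub t2).add t3).const_mul (-(Real.sqrt 2))
  refine hda_congr tot ?_
  norm_num
  field_simp
  ring

private lemma key1 (ω2 T2 Z0 W0 : ℝ)
    (hω2 : ω2 = Real.sqrt (2 + Real.sqrt 2)) (hT2 : T2 = 2 * π / ω2) :
    ∫ τ in (0:ℝ)..(1 * T2), gg1 ω2 Z0 W0 τ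
      = -(π * (Real.sqrt ((10 - 7 * Real.sqrt 2) * (2 + Real.sqrt 2)) * W0 - 8) * Z0 /
          (4 * Real.sqrt (2 * (2 + Real.sqrt 2)))) := by
  have he2 : Real.sqrt 2 ^ 2 = 2 := Real.sq_sqrt (by norm_num)
  have he0 : (0:ℝ) ≤ Real.sqrt 2 := Real.sqrt_nonneg 2
  have hene : Real.sqrt 2 ≠ 0 := by positivity
  have hωpos : 0 < ω2 := by rw [hω2]; positivity
  have hωne : ω2 ≠ 0 := ne_of_gt hωpos
  have hKne : (4 + 2*Real.sqrt 2) ≠ 0 := by positivity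
  have hT : ω2 * (1 * T2) = 2 * π := by rw [hT2]; field_simp
  have hsinT : Real.sin (ω2 * (1*T2)) = 0 := by rw [hT]; exact Real.sin_two_pi
  have hcosT : Real.cos (ω2 * (1*T2)) = 1 := by rw [hT]; exact Real.cos_two_pi
  have hsq1 : Real.sqrt ((10 - 7*Real.sqrt 2)*(2+Real.sqrt 2)) = 2 - Real.sqrt 2 := by
    rw [show (10 - 7*Real.sqrt 2)*(2+Real.sqrt 2) = (2 - Real.sqrt 2)^2 by
      linear_combination (-8:ℝ) * he2]
    exact Real.sqrt_sq (by nlinarith)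
  have hsq2 : Real.sqrt (2*(2+Real.sqrt 2)) = Real.sqrt 2 * ω2 := by
    rw [hω2, Real.sqrt_mul (by norm_num : (0:ℝ) ≤ 2)]
  have hint : IntervalIntegrable (gg1 ω2 Z0 W0) volume 0 (1*T2) := by
    apply Continuous.intervalIntegrable
    unfold gg1
    fun_prop
  rw [intervalIntegral.integral_eq_sub_of_hasDerivAt
    (fun x _ => hh1_deriv ω2 Z0 W0 hωne x) hint]
  unfold HH1
  rw [hsq1, hsq2]
  rw [hsinT, hcosT]
  simp only [hsinT, hcosT, Real.sin_zero, Real.cos_zero, mul_zero, zero_mul, mul_one, one_mul]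
  rw [hT2]
  field_simp
  ring_nf
  have s3 : Real.sqrt 2^3 = 2*Real.sqrt 2 := by rw [pow_succ, he2]
  simp only [he2, s3]
  ring

private lemma key2 (ω2 T2 Z0 W0 : ℝ)
    (hω2 : ω2 = Real.sqrt (2 + Real.sqrt 2)) (hT2 : T2 = 2 * π / ω2) :
    ∫ τ in (0:ℝ)..(1 * T2), gg2 ω2 Z0 W0 τ
      = π * (Real.sqrt 2 * W0 ^ 2 - 2 * W0 ^ 2 - 16 * W0 +
          3 * Real.sqrt 2 * Z0 ^ 2 - 6 * Z0 ^ 2) /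
          (8 * Real.sqrt (2 * (2 + Real.sqrt 2))) := by
  have he2 : Real.sqrt 2 ^ 2 = 2 := Real.sq_sqrt (by norm_num)
  have he0 : (0:ℝ) ≤ Real.sqrt 2 := Real.sqrt_nonneg 2
  have hene : Real.sqrt 2 ≠ 0 := by positivity
  have hωpos : 0 < ω2 := by rw [hω2]; positivity
  have hωne : ω2 ≠ 0 := ne_of_gt hωpos
  have hKne : (4 + 2*Real.sqrt 2) ≠ 0 := by positivity
  have hT : ω2 * (1 * T2) = 2 * π := by rw [hT2]; field_simp
  have hsinT : Real.sin (ω2 * (1*T2)) = 0 := by rw [hT]; exact Real.sin_two_pi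
  have hcosT : Real.cos (ω2 * (1*T2)) = 1 := by rw [hT]; exact Real.cos_two_pi
  have hsq2 : Real.sqrt (2*(2+Real.sqrt 2)) = Real.sqrt 2 * ω2 := by
    rw [hω2, Real.sqrt_mul (by norm_num : (0:ℝ) ≤ 2)]
  have hint : IntervalIntegrable (gg2 ω2 Z0 W0) volume 0 (1*T2) := by
    apply Continuous.intervalIntegrable
    unfold gg2
    fun_prop
  rw [intervalIntegral.integral_eq_sub_of_hasDerivAt
    (fun x _ => hh2_deriv ω2 Z0 W0 hωne x) hint]
  unfold HH2
  rw [hsq2]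
  rw [hsinT, hcosT]
  simp only [hsinT, hcosT, Real.sin_zero, Real.cos_zero, mul_zero, zero_mul, mul_one, one_mul]
  rw [hT2]
  field_simp
  ring_nf
  have s3 : Real.sqrt 2^3 = 2*Real.sqrt 2 := by rw [pow_succ, he2]
  simp only [he2, s3]
  ring

/-- The explicit computation of the averaged functions `𝒢¹, 𝒢²` for the
perturbation `F1 = θ2' + θ1² cos(ω2 τ)`, `F2 ≡ 0` with `p = 1`. -/
theorem averaged_functions_corollary2
    (ω2 T2 : ℝ)
    (hω2 : ω2 = Real.sqrt (2 + Real.sqrt 2))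
    (hT2 : T2 = 2 * π / ω2)
    (F1 F2 : ℝ → ℝ → ℝ → ℝ → ℝ → ℝ)
    (hF1 : ∀ τ a b c d, F1 τ a b c d = d + a ^ 2 * cos (ω2 * τ))
    (hF2 : ∀ τ a b c d, F2 τ a b c d = 0)
    (A2 B2 C2 D2 : ℝ → ℝ → ℝ → ℝ)
    (hA2 : ∀ Z0 W0 τ, A2 Z0 W0 τ =
      -((Z0 * cos (ω2 * τ) + W0 * sin (ω2 * τ)) / Real.sqrt (4 + 2 * Real.sqrt 2)))
    (hB2 : ∀ Z0 W0 τ, B2 Z0 W0 τ =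
      (-(W0 * cos (ω2 * τ)) + Z0 * sin (ω2 * τ)) / Real.sqrt 2)
    (hC2 : ∀ Z0 W0 τ, C2 Z0 W0 τ =
      (Z0 * cos (ω2 * τ) + W0 * sin (ω2 * τ)) / Real.sqrt (2 + Real.sqrt 2))
    (hD2 : ∀ Z0 W0 τ, D2 Z0 W0 τ = W0 * cos (ω2 * τ) - Z0 * sin (ω2 * τ)) :
    ∀ Z0 W0 : ℝ,
      (∫ τ in (0:ℝ)..(1 * T2), sin (ω2 * τ) *
          (-(Real.sqrt 2 * F1 τ (A2 Z0 W0 τ) (B2 Z0 W0 τ) (C2 Z0 W0 τ) (D2 Z0 W0 τ)) +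
            F2 τ (A2 Z0 W0 τ) (B2 Z0 W0 τ) (C2 Z0 W0 τ) (D2 Z0 W0 τ)))
        = -(π * (Real.sqrt ((10 - 7 * Real.sqrt 2) * (2 + Real.sqrt 2)) * W0 - 8) * Z0 /
            (4 * Real.sqrt (2 * (2 + Real.sqrt 2)))) ∧
      (∫ τ in (0:ℝ)..(1 * T2), cos (ω2 * τ) *
          (-(Real.sqrt 2 * F1 τ (A2 Z0 W0 τ) (B2 Z0 W0 τ) (C2 Z0 W0 τ) (D2 Z0 W0 τ)) +
            F2 τ (A2 Z0 W0 τ) (B2 Z0 W0 τ) (C2 Z0 W0 τ) (D2 Z0 W0 τ)))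
        = π * (Real.sqrt 2 * W0 ^ 2 - 2 * W0 ^ 2 - 16 * W0 +
            3 * Real.sqrt 2 * Z0 ^ 2 - 6 * Z0 ^ 2) /
            (8 * Real.sqrt (2 * (2 + Real.sqrt 2))) := by
  intro Z0 W0
  have hq2 : Real.sqrt (4 + 2 * Real.sqrt 2) ^ 2 = 4 + 2 * Real.sqrt 2 :=
    Real.sq_sqrt (by positivity)
  have hfun1 : ∀ τ : ℝ, sin (ω2 * τ) *
      (-(Real.sqrt 2 * F1 τ (A2 Z0 W0 τ) (B2 Z0 W0 τ) (C2 Z0 W0 τ) (D2 Z0 W0 τ)) +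
        F2 τ (A2 Z0 W0 τ) (B2 Z0 W0 τ) (C2 Z0 W0 τ) (D2 Z0 W0 τ)) = gg1 ω2 Z0 W0 τ := by
    intro τ
    rw [hF1, hF2, hA2, hD2]
    unfold gg1
    rw [neg_sq, div_pow, hq2]
    linear_combination (Real.sqrt 2 * Z0/2 - Real.sqrt 2*Z0*W0*
      (Real.sin (ω2*τ)^2+Real.cos (ω2*τ)^2+1)/(4+2*Real.sqrt 2)/4) * Real.sin_sq_add_cos_sq (ω2*τ)
  have hfun2 : ∀ τ : ℝ, cos (ω2 * τ) *
      (-(Real.sqrt 2 * F1 τ (A2 Z0 W0 τ) (B2 Z0 W0 τ) (C2 Z0 W0 τ) (D2 Z0 W0 τ)) +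
        F2 τ (A2 Z0 W0 τ) (B2 Z0 W0 τ) (C2 Z0 W0 τ) (D2 Z0 W0 τ)) = gg2 ω2 Z0 W0 τ := by
    intro τ
    rw [hF1, hF2, hA2, hD2]
    unfold gg2
    rw [neg_sq, div_pow, hq2]
    linear_combination (-(Real.sqrt 2 * W0)/2
      - Real.sqrt 2*Z0^2*(-Real.sin (ω2*τ)^2+7*Real.cos (ω2*τ)^2+3)/(4+2*Real.sqrt 2)/8
      - Real.sqrt 2*W0^2*(Real.sin (ω2*τ)^2+Real.cos (ω2*τ)^2+1)/(4+2*Real.sqrt 2)/8)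
      * Real.sin_sq_add_cos_sq (ω2*τ)
  constructor
  · simp only [hfun1]
    exact key1 ω2 T2 Z0 W0 hω2 hT2
  · simp only [hfun2]
    exact key2 ω2 T2 Z0 W0 hω2 hT2
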